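/- arXiv:1101.1320 — 2 statements merged into one kernel-verified Lean document; each statement's English description precedes it below -/
import Mathlib

section
/- Let n ≥ 1 and let (X_k)_{0 ≤ k ≤ n} be the lazy simple random walk on ℤ started at 0 (steps +1 with probability 1/4, −1 with probability 1/4, and 0 with probability 1/2, independently). Then for every natural number r, the probability that the set {j : 1 ≤ j ≤ n, X_j = 0 and X_i ≥ 0 for all 0 ≤ i < j} has at least r elements is at most (3/4)^r. -/
open Finset

noncomputable def kth (S : Finset ℕ) (r : ℕ) : ℕ :=
  if h : r < S.card then (S.orderIsoOfFin rfl ⟨r, h⟩ : ℕ) else 0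

lemma kth_mem {S : Finset ℕ} {r : ℕ} (h : r < S.card) : kth S r ∈ S := by
  rw [kth, dif_pos h]; exact (S.orderIsoOfFin rfl ⟨r, h⟩).2

lemma kth_lt_kth {S : Finset ℕ} {r s : ℕ} (hrs : r < s) (h : s < S.card) :
    kth S r < kth S s := by
  rw [kth, kth, dif_pos h, dif_pos (hrs.trans h)]
  exact_mod_cast (S.orderIsoOfFin rfl).strictMono (show (⟨r, hrs.trans h⟩ : Fin S.card) < ⟨s, h⟩ from hrs)

lemma kth_le_kth {S : Finset ℕ} {r s : ℕ} (hrs : r ≤ s) (h : s < S.card) :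
    kth S r ≤ kth S s := by
  rcases hrs.lt_or_eq with h' | h'
  · exact (kth_lt_kth h' h).le
  · rw [h']

lemma filter_le_kth {S : Finset ℕ} {r : ℕ} (h : r < S.card) :
    S.filter (· ≤ kth S r) = Finset.image (fun i => kth S i) (Finset.range (r + 1)) := by
  ext j
  simp only [mem_filter, mem_image, mem_range, Nat.lt_succ_iff]
  constructor
  · rintro ⟨hjS, hj⟩
    set e := S.orderIsoOfFin rfl with he
    refine ⟨(e.symm ⟨j, hjS⟩).val, ?_, ?_⟩
    · have : e.symm ⟨j, hjS⟩ ≤ ⟨r, h⟩ := by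
        rw [OrderIso.symm_apply_le]
        have : j ≤ (e ⟨r, h⟩ : ℕ) := by rwa [kth, dif_pos h] at hj
        exact this
      exact this
    · rw [kth, dif_pos ((e.symm ⟨j, hjS⟩).isLt)]
      simp
      exact congrArg Subtype.val (e.apply_symm_apply ⟨j, hjS⟩)
  · rintro ⟨i, hi, rfl⟩
    exact ⟨kth_mem (lt_of_le_of_lt hi h), kth_le_kth hi h⟩

lemma card_filter_kth {S : Finset ℕ} {r : ℕ} (h : r < S.card) :
    (S.filter (· ≤ kth S r)).card = r + 1 := by
  rw [filter_le_kth h, Finset.card_image_of_injOn, Finset.card_range]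
  intro a ha b hb hab
  simp only [coe_range, Set.mem_Iio, Nat.lt_succ_iff] at ha hb
  by_contra hne
  rcases Nat.lt_or_ge a b with h' | h'
  · exact absurd hab (kth_lt_kth h' (lt_of_le_of_lt hb h)).ne
  · rcases lt_of_le_of_ne h' (Ne.symm hne) with h''
    exact absurd hab.symm (kth_lt_kth h'' (lt_of_le_of_lt ha h)).ne

lemma kth_unique {S : Finset ℕ} {r t : ℕ} (ht : t ∈ S)
    (hc : (S.filter (· ≤ t)).card = r + 1) : kth S r = t := by
  have hr : r < S.card := by
    have : (S.filter (· ≤ t)).card ≤ S.card := Finset.card_filter_le _ _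
    omega
  set t' := kth S r with ht'
  have ht'S : t' ∈ S := kth_mem hr
  have hc' : (S.filter (· ≤ t')).card = r + 1 := card_filter_kth hr
  by_contra hne
  rcases Nat.lt_or_ge t' t with h' | h'
  · have : S.filter (· ≤ t') ⊂ S.filter (· ≤ t) := by
      refine Finset.ssubset_iff_of_subset (Finset.monotone_filter_right _ ?_) |>.2 ?_
      · intro x hx; omega
      · exact ⟨t, Finset.mem_filter.2 ⟨ht, le_refl t⟩, by simp [Finset.mem_filter]; omega⟩
    have := Finset.card_lt_card this; omega
  · rcases lt_of_le_of_ne h' (by omega) with h''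
    have : S.filter (· ≤ t) ⊂ S.filter (· ≤ t') := by
      refine Finset.ssubset_iff_of_subset (Finset.monotone_filter_right _ ?_) |>.2 ?_
      · intro x hx; omega
      · exact ⟨t', Finset.mem_filter.2 ⟨ht'S, le_refl t'⟩, by simp [Finset.mem_filter]; omega⟩
    have := Finset.card_lt_card this; omega

/-- The step of the lazy simple random walk: `+1`, `−1`, `0`, `0`. -/
def lazyStep : Fin 4 → ℤ := ![1, -1, 0, 0]

/-- The lazy simple random walk after `k` steps, driven by `ω : Fin n → Fin 4`:
`X_k(ω) = ∑_{i < k} lazyStep (ω i)`. -/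
def lazyWalk (n : ℕ) (ω : Fin n → Fin 4) (k : ℕ) : ℤ :=
  ∑ i ∈ Finset.univ.filter (fun i : Fin n => (i : ℕ) < k), lazyStep (ω i)

lemma lazyWalk_congr {n : ℕ} {ω ω' : Fin n → Fin 4} {k : ℕ}
    (h : ∀ i : Fin n, (i : ℕ) < k → ω i = ω' i) : lazyWalk n ω k = lazyWalk n ω' k :=
  Finset.sum_congr rfl (fun i hi => by rw [h i (by simpa using hi)])

lemma lazyWalk_zero {n : ℕ} (ω : Fin n → Fin 4) : lazyWalk n ω 0 = 0 := by
  simp [lazyWalk]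

lemma lazyWalk_succ {n k : ℕ} (hk : k < n) (ω : Fin n → Fin 4) :
    lazyWalk n ω (k + 1) = lazyWalk n ω k + lazyStep (ω ⟨k, hk⟩) := by
  rw [lazyWalk, lazyWalk]
  have h : Finset.univ.filter (fun i : Fin n => (i : ℕ) < k + 1)
      = insert ⟨k, hk⟩ (Finset.univ.filter (fun i : Fin n => (i : ℕ) < k)) := by
    ext i
    simp only [mem_filter, mem_univ, true_and, mem_insert, Fin.ext_iff]
    omega
  rw [h, Finset.sum_insert (by simp)]
  ring

def retSet (n : ℕ) (ω : Fin n → Fin 4) : Finset ℕ :=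
  (Finset.Icc 1 n).filter (fun j =>
    lazyWalk n ω j = 0 ∧ ∀ i < j, 0 ≤ lazyWalk n ω i)

lemma zero_not_mem_retSet (n : ℕ) (ω : Fin n → Fin 4) : 0 ∉ retSet n ω := by
  simp [retSet]

lemma retSet_update_iff {n : ℕ} (ω : Fin n → Fin 4) (t : Fin n) (a : Fin 4) {j : ℕ}
    (hj : j ≤ (t : ℕ)) :
    (j ∈ retSet n (Function.update ω t a) ↔ j ∈ retSet n ω) := by
  have hw : ∀ m, m ≤ (t : ℕ) → lazyWalk n (Function.update ω t a) m = lazyWalk n ω m := by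
    intro m hm
    refine lazyWalk_congr (fun i hi => ?_)
    refine Function.update_of_ne ?_ _ _
    intro hit
    rw [hit] at hi
    omega
  simp only [retSet, mem_filter]
  constructor
  · rintro ⟨h1, h2, h3⟩
    refine ⟨h1, by rw [← hw j hj]; exact h2, fun i hij => ?_⟩
    rw [← hw i (le_of_lt (lt_of_lt_of_le hij hj))]
    exact h3 i hij
  · rintro ⟨h1, h2, h3⟩
    refine ⟨h1, by rw [hw j hj]; exact h2, fun i hij => ?_⟩
    rw [hw i (le_of_lt (lt_of_lt_of_le hij hj))]
    exact h3 i hij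

lemma recover {n r : ℕ} {ω : Fin n → Fin 4}
    (hω : r + 1 ≤ (retSet n ω).card) :
    ∃ ht : kth (insert 0 (retSet n ω)) r < n,
      ω ⟨kth (insert 0 (retSet n ω)) r, ht⟩ ≠ 1 ∧
      ∀ a : Fin 4,
        r ≤ (retSet n (Function.update ω ⟨kth (insert 0 (retSet n ω)) r, ht⟩ a)).card ∧
        kth (insert 0 (retSet n (Function.update ω ⟨kth (insert 0 (retSet n ω)) r, ht⟩ a))) r
          = kth (insert 0 (retSet n ω)) r := by
  set S := insert 0 (retSet n ω) with hS
  have hcardS : S.card = (retSet n ω).card + 1 :=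
    Finset.card_insert_of_notMem (zero_not_mem_retSet n ω)
  have hr1 : r + 1 < S.card := by omega
  have hr : r < S.card := by omega
  set t := kth S r with htdef
  set u := kth S (r + 1) with hudef
  have htu : t < u := kth_lt_kth (Nat.lt_succ_self r) hr1
  have huS : u ∈ S := kth_mem hr1
  have huR : u ∈ retSet n ω := by
    rcases Finset.mem_insert.1 huS with h | h
    · omega
    · exact h
  have hun : u ≤ n := by
    have := (Finset.mem_filter.1 huR).1
    exact (Finset.mem_Icc.1 this).2
  have ht : t < n := lt_of_lt_of_le htu hun
  have htS : t ∈ S := kth_mem hr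
  -- the walk is at 0 at time t
  have hwt : lazyWalk n ω t = 0 := by
    rcases Finset.mem_insert.1 htS with h | h
    · rw [h]; exact lazyWalk_zero ω
    · exact ((Finset.mem_filter.1 h).2).1
  -- walk nonneg at time t+1
  have huprop := (Finset.mem_filter.1 huR).2
  have hwt1 : 0 ≤ lazyWalk n ω (t + 1) := by
    rcases eq_or_lt_of_le (Nat.succ_le_of_lt htu) with h | h
    · rw [show t + 1 = u from h, huprop.1]
    · exact huprop.2 (t + 1) h
  have hstep : 0 ≤ lazyStep (ω ⟨t, ht⟩) := by
    rw [lazyWalk_succ ht ω, hwt, zero_add] at hwt1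
    exact hwt1
  refine ⟨ht, ?_, ?_⟩
  · intro h1
    rw [h1] at hstep
    norm_num [lazyStep] at hstep
  · intro a
    set ω' := Function.update ω ⟨t, ht⟩ a with hω'
    set S' := insert 0 (retSet n ω') with hS'
    have hfilter : S'.filter (· ≤ t) = S.filter (· ≤ t) := by
      ext j
      simp only [mem_filter, hS', hS, mem_insert, and_congr_left_iff]
      intro hj
      rw [retSet_update_iff ω ⟨t, ht⟩ a hj]
    have hcard' : (S'.filter (· ≤ t)).card = r + 1 := by
      rw [hfilter, htdef, card_filter_kth hr]
    have htS' : t ∈ S' := by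
      have : t ∈ S'.filter (· ≤ t) := by
        rw [hfilter]
        exact Finset.mem_filter.2 ⟨htS, le_refl t⟩
      exact (Finset.mem_filter.1 this).1
    have hk : kth S' r = t := kth_unique htS' hcard'
    have hcardS' : S'.card = (retSet n ω').card + 1 :=
      Finset.card_insert_of_notMem (zero_not_mem_retSet n ω')
    have hle : r + 1 ≤ S'.card := by
      calc r + 1 = (S'.filter (· ≤ t)).card := hcard'.symm
      _ ≤ S'.card := Finset.card_filter_le _ _
    exact ⟨by omega, hk⟩

lemma card_step (n r : ℕ) :
    (Finset.univ.filter (fun ω : Fin n → Fin 4 => r + 1 ≤ (retSet n ω).card)).card * 4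
    ≤ (Finset.univ.filter (fun ω : Fin n → Fin 4 => r ≤ (retSet n ω).card)).card * 3 := by
  classical
  set A1 := Finset.univ.filter (fun ω : Fin n → Fin 4 => r + 1 ≤ (retSet n ω).card) with hA1
  set A0 := Finset.univ.filter (fun ω : Fin n → Fin 4 => r ≤ (retSet n ω).card) with hA0
  set C3 : Finset (Fin 4) := {0, 2, 3} with hC3
  set Ψ : (Fin n → Fin 4) × Fin 4 → (Fin n → Fin 4) × Fin 4 := fun p =>
    if ht : kth (insert 0 (retSet n p.1)) r < n
    then (Function.update p.1 ⟨kth (insert 0 (retSet n p.1)) r, ht⟩ p.2,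
          p.1 ⟨kth (insert 0 (retSet n p.1)) r, ht⟩)
    else p with hΨ
  have hne3 : ∀ s : Fin 4, s ≠ 1 → s ∈ C3 := by decide
  have key : (A1 ×ˢ (Finset.univ : Finset (Fin 4))).card ≤ (A0 ×ˢ C3).card := by
    apply Finset.card_le_card_of_injOn Ψ
    · intro p hp
      rw [Finset.mem_coe, Finset.mem_product] at hp
      have hω : r + 1 ≤ (retSet n p.1).card := (Finset.mem_filter.1 hp.1).2
      obtain ⟨ht, hne, hall⟩ := recover hω
      rw [hΨ]
      simp only [dif_pos ht]
      rw [Finset.mem_coe, Finset.mem_product]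
      exact ⟨Finset.mem_filter.2 ⟨Finset.mem_univ _, (hall p.2).1⟩, hne3 _ hne⟩
    · intro p hp q hq heq
      rw [Finset.coe_product, Set.mem_prod] at hp hq
      have hωp : r + 1 ≤ (retSet n p.1).card := (Finset.mem_filter.1 hp.1).2
      have hωq : r + 1 ≤ (retSet n q.1).card := (Finset.mem_filter.1 hq.1).2
      obtain ⟨htp, hnep, hallp⟩ := recover hωp
      obtain ⟨htq, hneq, hallq⟩ := recover hωq
      rw [hΨ] at heq
      simp only [dif_pos htp, dif_pos htq, Prod.mk.injEq] at heq
      obtain ⟨h1, h2⟩ := heq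
      have hkp := (hallp p.2).2
      have hkq := (hallq q.2).2
      rw [h1] at hkp
      have htt : kth (insert 0 (retSet n p.1)) r = kth (insert 0 (retSet n q.1)) r := by
        rw [← hkp]; exact hkq
      have hpos : (⟨kth (insert 0 (retSet n p.1)) r, htp⟩ : Fin n)
          = ⟨kth (insert 0 (retSet n q.1)) r, htq⟩ := by
        exact Fin.ext htt
      have hfun : p.1 = q.1 := by
        have e1 : p.1 = Function.update
            (Function.update p.1 (⟨kth (insert 0 (retSet n p.1)) r, htp⟩ : Fin n) p.2)
            (⟨kth (insert 0 (retSet n p.1)) r, htp⟩ : Fin n)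
            (p.1 ⟨kth (insert 0 (retSet n p.1)) r, htp⟩) := by
          rw [Function.update_idem, Function.update_eq_self]
        have e2 : q.1 = Function.update
            (Function.update q.1 (⟨kth (insert 0 (retSet n q.1)) r, htq⟩ : Fin n) q.2)
            (⟨kth (insert 0 (retSet n q.1)) r, htq⟩ : Fin n)
            (q.1 ⟨kth (insert 0 (retSet n q.1)) r, htq⟩) := by
          rw [Function.update_idem, Function.update_eq_self]
        rw [e1, e2, ← h1, ← h2, hpos]
      have hval : p.2 = q.2 := by
        have e1 : p.2 = Function.update p.1
            (⟨kth (insert 0 (retSet n p.1)) r, htp⟩ : Fin n) p.2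
            ⟨kth (insert 0 (retSet n p.1)) r, htp⟩ := by
          rw [Function.update_self]
        have e2 : q.2 = Function.update q.1
            (⟨kth (insert 0 (retSet n q.1)) r, htq⟩ : Fin n) q.2
            ⟨kth (insert 0 (retSet n q.1)) r, htq⟩ := by
          rw [Function.update_self]
        rw [e1, e2, h1, hpos]
      exact Prod.ext hfun hval
  have hc3 : C3.card = 3 := by decide
  rw [Finset.card_product, Finset.card_product, Finset.card_univ, hc3] at key
  simpa using key

/-- For the lazy simple random walk on `ℤ` started at `0` (uniform measure on
`(Fin 4)ⁿ`), the probability that the set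
`{j : 1 ≤ j ≤ n, X_j = 0 and X_i ≥ 0 for all 0 ≤ i < j}` has at least `r`
elements is at most `(3/4)^r`. -/
theorem returns_with_nonneg_history_tail (n : ℕ) (hn : 1 ≤ n) (r : ℕ) :
    ((Finset.univ.filter (fun ω : Fin n → Fin 4 =>
        r ≤ ((Finset.Icc 1 n).filter (fun j =>
          lazyWalk n ω j = 0 ∧ ∀ i < j, 0 ≤ lazyWalk n ω i)).card)).card : ℝ)
        / 4 ^ n
      ≤ (3 / 4 : ℝ) ^ r := by
  have key : ∀ s : ℕ,
      ((Finset.univ.filter (fun ω : Fin n → Fin 4 => s ≤ (retSet n ω).card)).card : ℝ)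
        / 4 ^ n ≤ (3 / 4 : ℝ) ^ s := by
    intro s
    induction s with
    | zero =>
      rw [pow_zero]
      rw [div_le_one (by positivity)]
      have h1 : (Finset.univ.filter
          (fun ω : Fin n → Fin 4 => 0 ≤ (retSet n ω).card)).card ≤ 4 ^ n := by
        calc (Finset.univ.filter
            (fun ω : Fin n → Fin 4 => 0 ≤ (retSet n ω).card)).card
            ≤ (Finset.univ : Finset (Fin n → Fin 4)).card := Finset.card_filter_le _ _
          _ = 4 ^ n := by simp [Finset.card_univ]
      exact_mod_cast h1
    | succ s ih =>
      have hstep := card_step n s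
      have h1 : ((Finset.univ.filter
          (fun ω : Fin n → Fin 4 => s + 1 ≤ (retSet n ω).card)).card : ℝ)
          ≤ 3 / 4 * (Finset.univ.filter
          (fun ω : Fin n → Fin 4 => s ≤ (retSet n ω).card)).card := by
        have := (Nat.cast_le (α := ℝ)).2 hstep
        push_cast at this
        linarith
      calc ((Finset.univ.filter
          (fun ω : Fin n → Fin 4 => s + 1 ≤ (retSet n ω).card)).card : ℝ) / 4 ^ n
          ≤ (3 / 4 * (Finset.univ.filter
            (fun ω : Fin n → Fin 4 => s ≤ (retSet n ω).card)).card) / 4 ^ n := by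
            apply div_le_div_of_nonneg_right h1 (by positivity)
        _ = 3 / 4 * (((Finset.univ.filter
            (fun ω : Fin n → Fin 4 => s ≤ (retSet n ω).card)).card : ℝ) / 4 ^ n) := by ring
        _ ≤ 3 / 4 * (3 / 4 : ℝ) ^ s := by
            apply mul_le_mul_of_nonneg_left ih (by norm_num)
        _ = (3 / 4 : ℝ) ^ (s + 1) := by rw [pow_succ]; ring
  exact key r
end

section
/- Let n, n′ ≥ 1 and let (X_k)_{0 ≤ k ≤ n} and (Y_k)_{0 ≤ k ≤ n′} be two independent lazy simple random walks on ℤ started at 0 (each stepping +1 with probability 1/4, −1 with probability 1/4, and 0 with probability 1/2, independently). Let N = |{j : 1 ≤ j ≤ n, X_j = 0 and X_i ≥ 0 for all 0 ≤ i < j}| and N′ = |{j : 1 ≤ j ≤ n′, Y_j = 0 and Y_i ≥ 0 for all 0 ≤ i < j}|. Then for every natural number m, the probability that N + N′ ≥ m is at most 2·(3/4)^{m/2}. -/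
/-- The number of times `j ∈ {1,…,n}` at which the walk returns to `0` with
nonnegative history. -/
def returnsCount (n : ℕ) (ω : Fin n → Fin 4) : ℕ :=
  ((Finset.Icc 1 n).filter (fun j =>
    lazyWalk n ω j = 0 ∧ ∀ i < j, 0 ≤ lazyWalk n ω i)).card

namespace TwoWalks

/-- The set of return times with nonnegative history. -/
def retSet (n : ℕ) (ω : Fin n → Fin 4) : Finset ℕ :=
  (Finset.Icc 1 n).filter (fun j =>
    lazyWalk n ω j = 0 ∧ ∀ i < j, 0 ≤ lazyWalk n ω i)

lemma returnsCount_eq (n : ℕ) (ω : Fin n → Fin 4) :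
    returnsCount n ω = (retSet n ω).card := rfl

lemma retSet_subset (n : ℕ) (ω : Fin n → Fin 4) : retSet n ω ⊆ Finset.Icc 1 n :=
  Finset.filter_subset _ _

lemma mem_retSet {n : ℕ} {ω : Fin n → Fin 4} {j : ℕ} :
    j ∈ retSet n ω ↔ (1 ≤ j ∧ j ≤ n) ∧ lazyWalk n ω j = 0 ∧ ∀ i < j, 0 ≤ lazyWalk n ω i := by
  simp [retSet, Finset.mem_filter, Finset.mem_Icc, and_assoc]

/-- The number of elements of `S` that are `≤ j`. -/
def rank (S : Finset ℕ) (j : ℕ) : ℕ := (S.filter (· ≤ j)).card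

lemma rank_mono (S : Finset ℕ) {j j' : ℕ} (h : j ≤ j') : rank S j ≤ rank S j' := by
  apply Finset.card_le_card
  intro x hx
  simp only [Finset.mem_filter] at hx ⊢
  exact ⟨hx.1, hx.2.trans h⟩

lemma rank_top {n : ℕ} {S : Finset ℕ} (hS : S ⊆ Finset.Icc 1 n) : rank S n = S.card := by
  unfold rank
  rw [Finset.filter_true_of_mem]
  intro x hx
  exact (Finset.mem_Icc.mp (hS hx)).2

lemma rank_zero {n : ℕ} {S : Finset ℕ} (hS : S ⊆ Finset.Icc 1 n) : rank S 0 = 0 := by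
  unfold rank
  rw [Finset.card_eq_zero, Finset.filter_eq_empty_iff]
  intro x hx hx0
  have := (Finset.mem_Icc.mp (hS hx)).1
  omega

lemma rank_succ_le (S : Finset ℕ) (j : ℕ) : rank S (j + 1) ≤ rank S j + 1 := by
  unfold rank
  have hsub : S.filter (· ≤ j + 1) ⊆ insert (j + 1) (S.filter (· ≤ j)) := by
    intro x hx
    simp only [Finset.mem_filter] at hx
    simp only [Finset.mem_insert, Finset.mem_filter]
    by_cases hxe : x = j + 1
    · exact Or.inl hxe
    · exact Or.inr ⟨hx.1, by omega⟩
  calc (S.filter (· ≤ j + 1)).card ≤ (insert (j + 1) (S.filter (· ≤ j))).card :=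
        Finset.card_le_card hsub
    _ ≤ (S.filter (· ≤ j)).card + 1 := Finset.card_insert_le _ _

/-- `kth S k`: the `k`-th smallest element of `S` (1-indexed), with `kth S 0 = 0`. -/
noncomputable def kth (S : Finset ℕ) (k : ℕ) : ℕ := sInf {j | k ≤ rank S j}

lemma kth_zero (S : Finset ℕ) : kth S 0 = 0 :=
  Nat.eq_zero_of_le_zero (Nat.sInf_le (Nat.zero_le _))

lemma le_rank_kth {n : ℕ} {S : Finset ℕ} (hS : S ⊆ Finset.Icc 1 n) {k : ℕ}
    (hk : k ≤ S.card) : k ≤ rank S (kth S k) := by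
  have hne : {j | k ≤ rank S j}.Nonempty :=
    ⟨n, by simp only [Set.mem_setOf_eq, rank_top hS]; exact hk⟩
  have hmem := Nat.sInf_mem hne
  exact hmem

lemma rank_lt_of_lt_kth {S : Finset ℕ} {k j : ℕ} (h : j < kth S k) : rank S j < k := by
  by_contra h'
  push_neg at h'
  have hle : kth S k ≤ j := Nat.sInf_le (show j ∈ {i | k ≤ rank S i} from h')
  omega

lemma rank_kth {n : ℕ} {S : Finset ℕ} (hS : S ⊆ Finset.Icc 1 n) {k : ℕ}
    (hk : k ≤ S.card) : rank S (kth S k) = k := by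
  have hge := le_rank_kth hS hk
  rcases Nat.eq_zero_or_pos k with rfl | hk1
  · rw [kth_zero, rank_zero hS]
  · have hp0 : kth S k ≠ 0 := by
      intro h0
      rw [h0, rank_zero hS] at hge
      omega
    have hlt : rank S (kth S k - 1) < k := rank_lt_of_lt_kth (by omega)
    have hsucc := rank_succ_le S (kth S k - 1)
    rw [show kth S k - 1 + 1 = kth S k by omega] at hsucc
    omega

lemma kth_mem {n : ℕ} {S : Finset ℕ} (hS : S ⊆ Finset.Icc 1 n) {k : ℕ}
    (hk : k ≤ S.card) (hk1 : 1 ≤ k) : kth S k ∈ S := by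
  have hge := le_rank_kth hS hk
  have hp0 : kth S k ≠ 0 := by
    intro h0
    rw [h0, rank_zero hS] at hge
    omega
  by_contra hns
  have hfe : S.filter (· ≤ kth S k) = S.filter (· ≤ kth S k - 1) := by
    ext x
    simp only [Finset.mem_filter]
    constructor
    · rintro ⟨hxS, hx⟩
      refine ⟨hxS, ?_⟩
      rcases Nat.lt_or_ge x (kth S k) with h | h
      · omega
      · have hxeq : x = kth S k := by omega
        exact absurd (hxeq ▸ hxS) hns
    · rintro ⟨hxS, hx⟩
      exact ⟨hxS, by omega⟩
  have heq : rank S (kth S k) = rank S (kth S k - 1) := by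
    unfold rank
    rw [hfe]
  have hlt := rank_lt_of_lt_kth (show kth S k - 1 < kth S k by omega)
  omega

lemma kth_lt_kth {n : ℕ} {S : Finset ℕ} (hS : S ⊆ Finset.Icc 1 n) {k : ℕ}
    (hk : k + 1 ≤ S.card) : kth S k < kth S (k + 1) := by
  by_contra h
  push_neg at h
  have h1 := le_rank_kth hS hk
  have h2 := rank_kth hS (show k ≤ S.card by omega)
  have h3 := rank_mono S h
  omega

lemma kth_congr (S S' : Finset ℕ) (k : ℕ)
    (hfilter : S'.filter (· ≤ kth S k) = S.filter (· ≤ kth S k))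
    (hp : k ≤ rank S (kth S k)) : kth S' k = kth S k := by
  have h1 : k ≤ rank S' (kth S k) := by
    unfold rank
    rw [hfilter]
    exact hp
  have h2 : ∀ j, j ≤ kth S k → S'.filter (· ≤ j) = S.filter (· ≤ j) := by
    intro j hj
    ext x
    have hx := Finset.ext_iff.mp hfilter x
    simp only [Finset.mem_filter] at hx ⊢
    constructor
    · rintro ⟨hxS, hxj⟩
      exact ⟨(hx.mp ⟨hxS, by omega⟩).1, hxj⟩
    · rintro ⟨hxS, hxj⟩
      exact ⟨(hx.mpr ⟨hxS, by omega⟩).1, hxj⟩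
  apply le_antisymm
  · exact Nat.sInf_le h1
  · by_contra hc
    push_neg at hc
    have hne : {j | k ≤ rank S' j}.Nonempty := ⟨kth S k, h1⟩
    have hmem' := Nat.sInf_mem hne
    have hmem : k ≤ rank S' (kth S' k) := hmem'
    have heq : rank S' (kth S' k) = rank S (kth S' k) := by
      unfold rank
      rw [h2 _ (by omega)]
    have hlt := rank_lt_of_lt_kth hc
    omega

lemma lazyWalk_zero (n : ℕ) (ω : Fin n → Fin 4) : lazyWalk n ω 0 = 0 := by
  simp [lazyWalk]

lemma lazyWalk_succ (n : ℕ) (ω : Fin n → Fin 4) {p : ℕ} (h : p < n) :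
    lazyWalk n ω (p + 1) = lazyWalk n ω p + lazyStep (ω ⟨p, h⟩) := by
  unfold lazyWalk
  have hins : Finset.univ.filter (fun i : Fin n => (i : ℕ) < p + 1)
      = insert ⟨p, h⟩ (Finset.univ.filter (fun i : Fin n => (i : ℕ) < p)) := by
    ext i
    simp only [Finset.mem_filter, Finset.mem_univ, true_and, Finset.mem_insert, Fin.ext_iff]
    omega
  rw [hins, Finset.sum_insert (by simp)]
  ring

lemma lazyWalk_update (n : ℕ) (ω : Fin n → Fin 4) (p : ℕ) (hpn : p < n) (v : Fin 4)
    {i : ℕ} (hi : i ≤ p) :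
    lazyWalk n (Function.update ω ⟨p, hpn⟩ v) i = lazyWalk n ω i := by
  unfold lazyWalk
  apply Finset.sum_congr rfl
  intro j hj
  simp only [Finset.mem_filter] at hj
  have hne : j ≠ (⟨p, hpn⟩ : Fin n) := by
    intro e
    have : (j : ℕ) = p := by rw [e]
    omega
  rw [Function.update_of_ne hne]

lemma mem_retSet_update {n : ℕ} {ω : Fin n → Fin 4} {p : ℕ} {hpn : p < n} {v : Fin 4}
    {j : ℕ} (hjp : j ≤ p) :
    j ∈ retSet n (Function.update ω ⟨p, hpn⟩ v) ↔ j ∈ retSet n ω := by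
  have h1 : lazyWalk n (Function.update ω ⟨p, hpn⟩ v) j = lazyWalk n ω j :=
    lazyWalk_update n ω p hpn v hjp
  have h2 : ∀ i < j, lazyWalk n (Function.update ω ⟨p, hpn⟩ v) i = lazyWalk n ω i :=
    fun i hi => lazyWalk_update n ω p hpn v (by omega)
  simp only [mem_retSet, h1]
  constructor
  · rintro ⟨ha, hb, hc⟩
    exact ⟨ha, hb, fun i hi => by rw [← h2 i hi]; exact hc i hi⟩
  · rintro ⟨ha, hb, hc⟩
    exact ⟨ha, hb, fun i hi => by rw [h2 i hi]; exact hc i hi⟩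

lemma retSet_filter_update (n : ℕ) (ω : Fin n → Fin 4) (p : ℕ) (hpn : p < n) (v : Fin 4) :
    (retSet n (Function.update ω ⟨p, hpn⟩ v)).filter (· ≤ p)
      = (retSet n ω).filter (· ≤ p) := by
  ext j
  simp only [Finset.mem_filter]
  constructor
  · rintro ⟨h, hjp⟩
    exact ⟨(mem_retSet_update hjp).mp h, hjp⟩
  · rintro ⟨h, hjp⟩
    exact ⟨(mem_retSet_update hjp).mpr h, hjp⟩

lemma kth_lt {n k : ℕ} {ω : Fin n → Fin 4} (hω : k + 1 ≤ (retSet n ω).card) :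
    kth (retSet n ω) k < n := by
  have hS : retSet n ω ⊆ Finset.Icc 1 n := retSet_subset n ω
  have h1 : kth (retSet n ω) k < kth (retSet n ω) (k + 1) := kth_lt_kth hS hω
  have h2 : kth (retSet n ω) (k + 1) ∈ retSet n ω := kth_mem hS hω (by omega)
  have := (Finset.mem_Icc.mp (hS h2)).2
  omega

lemma walk_kth_zero {n k : ℕ} {ω : Fin n → Fin 4} (hk : k ≤ (retSet n ω).card) :
    lazyWalk n ω (kth (retSet n ω) k) = 0 := by
  rcases Nat.eq_zero_or_pos k with rfl | h1
  · rw [kth_zero]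
    exact lazyWalk_zero n ω
  · exact (mem_retSet.mp (kth_mem (retSet_subset n ω) hk h1)).2.1

lemma step_ne_one {n k : ℕ} {ω : Fin n → Fin 4} (hω : k + 1 ≤ (retSet n ω).card) :
    ω ⟨kth (retSet n ω) k, kth_lt hω⟩ ≠ 1 := by
  have hS : retSet n ω ⊆ Finset.Icc 1 n := retSet_subset n ω
  have hpq : kth (retSet n ω) k < kth (retSet n ω) (k + 1) := kth_lt_kth hS hω
  have hqS := mem_retSet.mp (kth_mem hS hω (by omega))
  have hXp : lazyWalk n ω (kth (retSet n ω) k) = 0 := walk_kth_zero (by omega)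
  have hpn : kth (retSet n ω) k < n := kth_lt hω
  have hXp1 : 0 ≤ lazyWalk n ω (kth (retSet n ω) k + 1) := by
    rcases Nat.lt_or_ge (kth (retSet n ω) k + 1) (kth (retSet n ω) (k + 1)) with h | h
    · exact hqS.2.2 _ h
    · rw [show kth (retSet n ω) k + 1 = kth (retSet n ω) (k + 1) by omega, hqS.2.1]
  have hstep := lazyWalk_succ n ω (kth_lt hω)
  intro hcontra
  rw [hstep, hXp, hcontra] at hXp1
  simp [lazyStep] at hXp1

/-- The event that the walk has at least `k` returns to `0` with nonnegative history. -/
def A (n k : ℕ) : Finset (Fin n → Fin 4) :=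
  Finset.univ.filter (fun ω => k ≤ returnsCount n ω)

lemma update_mem_and_kth {n k : ℕ} {ω : Fin n → Fin 4} (hω : k + 1 ≤ (retSet n ω).card)
    (v : Fin 4) :
    k ≤ (retSet n (Function.update ω ⟨kth (retSet n ω) k, kth_lt hω⟩ v)).card ∧
      kth (retSet n (Function.update ω ⟨kth (retSet n ω) k, kth_lt hω⟩ v)) k
        = kth (retSet n ω) k := by
  have hS : retSet n ω ⊆ Finset.Icc 1 n := retSet_subset n ω
  have hfilter := retSet_filter_update n ω (kth (retSet n ω) k) (kth_lt hω) v
  have hrank : rank (retSet n ω) (kth (retSet n ω) k) = k := rank_kth hS (by omega)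
  constructor
  · calc k = ((retSet n ω).filter (· ≤ kth (retSet n ω) k)).card := hrank.symm
      _ = ((retSet n (Function.update ω ⟨kth (retSet n ω) k, kth_lt hω⟩ v)).filter
            (· ≤ kth (retSet n ω) k)).card := by rw [hfilter]
      _ ≤ _ := Finset.card_le_card (Finset.filter_subset _ _)
  · exact kth_congr _ _ _ hfilter (le_of_eq hrank.symm)

lemma card_step (n k : ℕ) : (A n (k + 1)).card * 4 ≤ (A n k).card * 3 := by
  classical
  have hcard3 : (Finset.univ.filter (fun v : Fin 4 => v ≠ 1)).card = 3 := by decide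
  have key := Finset.card_le_card_of_injOn
      (s := (A n (k + 1)) ×ˢ (Finset.univ : Finset (Fin 4)))
      (t := (A n k) ×ˢ (Finset.univ.filter (fun v : Fin 4 => v ≠ 1)))
      (fun x => if h : kth (retSet n x.1) k < n then
          (Function.update x.1 ⟨kth (retSet n x.1) k, h⟩ x.2, x.1 ⟨kth (retSet n x.1) k, h⟩)
        else x)
      ?_ ?_
  · rwa [Finset.card_product, Finset.card_product, hcard3, Finset.card_univ,
      Fintype.card_fin] at key
  · rintro ⟨ω, v⟩ hx
    rw [Finset.mem_coe, Finset.mem_product] at hx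
    have hω : k + 1 ≤ (retSet n ω).card := by
      have := (Finset.mem_filter.mp hx.1).2
      rwa [returnsCount_eq] at this
    simp only
    rw [dif_pos (kth_lt hω), Finset.mem_coe, Finset.mem_product]
    constructor
    · show Function.update ω ⟨kth (retSet n ω) k, kth_lt hω⟩ v ∈ A n k
      simp only [A, Finset.mem_filter, Finset.mem_univ, true_and]
      rw [returnsCount_eq]
      exact (update_mem_and_kth hω v).1
    · show ω ⟨kth (retSet n ω) k, kth_lt hω⟩ ∈
        Finset.univ.filter (fun v : Fin 4 => v ≠ 1)
      simp only [Finset.mem_filter, Finset.mem_univ, true_and]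
      exact step_ne_one hω
  · rintro ⟨ω₁, v₁⟩ hx ⟨ω₂, v₂⟩ hy hEq
    simp only [Finset.coe_product, Set.mem_prod, Finset.mem_coe] at hx hy
    have hω₁ : k + 1 ≤ (retSet n ω₁).card := by
      have := (Finset.mem_filter.mp hx.1).2
      rwa [returnsCount_eq] at this
    have hω₂ : k + 1 ≤ (retSet n ω₂).card := by
      have := (Finset.mem_filter.mp hy.1).2
      rwa [returnsCount_eq] at this
    simp only at hEq
    rw [dif_pos (kth_lt hω₁), dif_pos (kth_lt hω₂)] at hEq
    have hfst := congrArg Prod.fst hEq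
    have hsnd := congrArg Prod.snd hEq
    simp only at hfst hsnd
    have hrec₁ := (update_mem_and_kth hω₁ v₁).2
    have hrec₂ := (update_mem_and_kth hω₂ v₂).2
    rw [hfst] at hrec₁
    rw [hrec₂] at hrec₁
    -- hrec₁ : kth (retSet n ω₂) k = kth (retSet n ω₁) k
    have hfin : (⟨kth (retSet n ω₁) k, kth_lt hω₁⟩ : Fin n)
        = ⟨kth (retSet n ω₂) k, kth_lt hω₂⟩ := Fin.ext hrec₁.symm
    rw [hfin] at hfst hsnd
    have hωeq : ω₁ = ω₂ := by
      funext i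
      by_cases hi : i = (⟨kth (retSet n ω₂) k, kth_lt hω₂⟩ : Fin n)
      · rw [hi]
        exact hsnd
      · have := congrFun hfst i
        rwa [Function.update_of_ne hi, Function.update_of_ne hi] at this
    have hveq : v₁ = v₂ := by
      have := congrFun hfst ⟨kth (retSet n ω₂) k, kth_lt hω₂⟩
      rwa [Function.update_self, Function.update_self] at this
    rw [hωeq, hveq]

lemma card_A_le (n k : ℕ) : (A n k).card * 4 ^ k ≤ 3 ^ k * 4 ^ n := by
  induction k with
  | zero =>
      have h : (A n 0).card ≤ 4 ^ n := by
        have := Finset.card_le_card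
          (Finset.filter_subset (fun ω => 0 ≤ returnsCount n ω) Finset.univ)
        simpa [Finset.card_univ, A] using this
      simpa using h
  | succ k ih =>
      calc (A n (k + 1)).card * 4 ^ (k + 1) = ((A n (k + 1)).card * 4) * 4 ^ k := by ring
        _ ≤ ((A n k).card * 3) * 4 ^ k := Nat.mul_le_mul_right _ (card_step n k)
        _ = 3 * ((A n k).card * 4 ^ k) := by ring
        _ ≤ 3 * (3 ^ k * 4 ^ n) := Nat.mul_le_mul_left _ ih
        _ = 3 ^ (k + 1) * 4 ^ n := by ring

lemma card_A_le_real (n k : ℕ) : ((A n k).card : ℝ) ≤ (3 / 4) ^ k * 4 ^ n := by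
  have h : ((A n k).card : ℝ) * 4 ^ k ≤ 3 ^ k * 4 ^ n := by
    exact_mod_cast card_A_le n k
  have h4 : (0 : ℝ) < 4 ^ k := by positivity
  rw [show ((3 : ℝ) / 4) ^ k * 4 ^ n = (3 ^ k * 4 ^ n) / 4 ^ k by rw [div_pow]; ring]
  rw [le_div_iff₀ h4]
  exact h

end TwoWalks

/-- For two independent lazy simple random walks on `ℤ` started at `0`
(uniform measure on `(Fin 4)ⁿ × (Fin 4)^{n′}`), the probability that the total
number of returns to `0` with nonnegative history, `N + N′`, is at least `m`
is at most `2·(3/4)^{m/2}`. -/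
theorem two_walks_returns_tail (n n' : ℕ) (hn : 1 ≤ n) (hn' : 1 ≤ n') (m : ℕ) :
    ((Finset.univ.filter (fun ω : (Fin n → Fin 4) × (Fin n' → Fin 4) =>
        m ≤ returnsCount n ω.1 + returnsCount n' ω.2)).card : ℝ)
        / (4 ^ n * 4 ^ n')
      ≤ 2 * (3 / 4 : ℝ) ^ ((m : ℝ) / 2) := by
  classical
  open TwoWalks in
  set k := (m + 1) / 2 with hk
  have hsub : (Finset.univ.filter (fun ω : (Fin n → Fin 4) × (Fin n' → Fin 4) =>
        m ≤ returnsCount n ω.1 + returnsCount n' ω.2)) ⊆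
      (Finset.univ.filter (fun ω : (Fin n → Fin 4) × (Fin n' → Fin 4) =>
        k ≤ returnsCount n ω.1)) ∪
      (Finset.univ.filter (fun ω : (Fin n → Fin 4) × (Fin n' → Fin 4) =>
        k ≤ returnsCount n' ω.2)) := by
    intro x hx
    simp only [Finset.mem_filter, Finset.mem_union, Finset.mem_univ, true_and] at hx ⊢
    omega
  have h1 : (Finset.univ.filter (fun ω : (Fin n → Fin 4) × (Fin n' → Fin 4) =>
      k ≤ returnsCount n ω.1)) = (TwoWalks.A n k) ×ˢ Finset.univ := by
    ext x
    simp [TwoWalks.A, Finset.mem_product]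
  have h2 : (Finset.univ.filter (fun ω : (Fin n → Fin 4) × (Fin n' → Fin 4) =>
      k ≤ returnsCount n' ω.2)) = Finset.univ ×ˢ (TwoWalks.A n' k) := by
    ext x
    simp [TwoWalks.A, Finset.mem_product]
  have hcard : (Finset.univ.filter (fun ω : (Fin n → Fin 4) × (Fin n' → Fin 4) =>
        m ≤ returnsCount n ω.1 + returnsCount n' ω.2)).card
      ≤ (TwoWalks.A n k).card * 4 ^ n' + (TwoWalks.A n' k).card * 4 ^ n := by
    calc _ ≤ _ := Finset.card_le_card hsub
      _ ≤ _ := Finset.card_union_le _ _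
      _ ≤ _ := by
        rw [h1, h2, Finset.card_product, Finset.card_product, Finset.card_univ,
          Finset.card_univ]
        simp [Fintype.card_fun]
        ring_nf
        omega
  have hA1 := TwoWalks.card_A_le_real n k
  have hA2 := TwoWalks.card_A_le_real n' k
  have hden : (0 : ℝ) < 4 ^ n * 4 ^ n' := by positivity
  rw [div_le_iff₀ hden]
  have hrpow : ((3 : ℝ) / 4) ^ k ≤ (3 / 4 : ℝ) ^ ((m : ℝ) / 2) := by
    rw [← Real.rpow_natCast ((3 : ℝ) / 4) k]
    apply Real.rpow_le_rpow_of_exponent_ge (by norm_num) (by norm_num)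
    rw [div_le_iff₀ (by norm_num : (0 : ℝ) < 2)]
    have hmk : m ≤ k * 2 := by omega
    exact_mod_cast hmk
  calc ((Finset.univ.filter (fun ω : (Fin n → Fin 4) × (Fin n' → Fin 4) =>
        m ≤ returnsCount n ω.1 + returnsCount n' ω.2)).card : ℝ)
      ≤ (TwoWalks.A n k).card * 4 ^ n' + (TwoWalks.A n' k).card * 4 ^ n := by
        exact_mod_cast hcard
    _ ≤ ((3 / 4) ^ k * 4 ^ n) * 4 ^ n' + ((3 / 4) ^ k * 4 ^ n') * 4 ^ n := by
        gcongr
    _ = 2 * (3 / 4 : ℝ) ^ k * (4 ^ n * 4 ^ n') := by ring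
    _ ≤ 2 * (3 / 4 : ℝ) ^ ((m : ℝ) / 2) * (4 ^ n * 4 ^ n') := by
        have := hrpow
        nlinarith [pow_pos (show (0:ℝ) < 4 from by norm_num) n,
          pow_pos (show (0:ℝ) < 4 from by norm_num) n']
end
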